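/- Restricted-dual supermultiplicativity: define Σ⁻(P) as the supremum of trace(S) over S ≥ 0 Hermitian on A, U ≥ 0 on A⊗B with Tr_A U = I_B and P(S ⊗ I_B − U)P ≤ 0. If (S₁, U₁) is feasible for P₁ in this restricted sense and (S₂, U₂) feasible for P₂, then (S₁ ⊗ S₂, U₁ ⊗ U₂) is feasible for P₁ ⊗ P₂; hence Σ⁻(P₁ ⊗ P₂) ≥ Σ⁻(P₁)·Σ⁻(P₂). -/

import Mathlib

open Matrix Kronecker ComplexOrder

/-- Partial trace over the first (`A`) factor. -/
noncomputable def ptraceA {A B : Type*} [Fintype A] (M : Matrix (A × B) (A × B) ℂ) :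
    Matrix B B ℂ :=
  Matrix.of fun b b' => ∑ a : A, M (a, b) (a, b')

/-- Restricted feasibility for `Σ⁻`: additionally `S ≥ 0`. -/
def FeasibleMinus {A B : Type*} [Fintype A] [Fintype B] [DecidableEq B]
    (P : Matrix (A × B) (A × B) ℂ) (S : Matrix A A ℂ) (U : Matrix (A × B) (A × B) ℂ) :
    Prop :=
  S.PosSemidef ∧ U.PosSemidef ∧ ptraceA U = 1 ∧
    (-(P * (S ⊗ₖ (1 : Matrix B B ℂ) - U) * P)).PosSemidef

/-- `Σ⁻(P)`: supremum of `trace S` over restricted feasible pairs. -/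
noncomputable def sigmaMinus {A B : Type*} [Fintype A] [Fintype B] [DecidableEq B]
    (P : Matrix (A × B) (A × B) ℂ) : ℝ :=
  sSup {r : ℝ | ∃ S U, FeasibleMinus P S U ∧ S.trace.re = r}

namespace SigmaAux

set_option linter.unusedSectionVars false

section Basic
variable {n m : Type*} [Fintype n] [Fintype m]

lemma kron_conjTranspose (A : Matrix n n ℂ) (B : Matrix m m ℂ) :
    (A ⊗ₖ B)ᴴ = Aᴴ ⊗ₖ Bᴴ := by
  ext ⟨i, j⟩ ⟨k, l⟩
  simp [conjTranspose_apply, Matrix.kroneckerMap_apply, star_mul', mul_comm]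

lemma sub_kron (A B : Matrix n n ℂ) (C : Matrix m m ℂ) :
    (A - B) ⊗ₖ C = A ⊗ₖ C - B ⊗ₖ C := by
  ext ⟨i, j⟩ ⟨k, l⟩
  simp [Matrix.kroneckerMap_apply, sub_mul]

lemma kron_sub (A : Matrix n n ℂ) (B C : Matrix m m ℂ) :
    A ⊗ₖ (B - C) = A ⊗ₖ B - A ⊗ₖ C := by
  ext ⟨i, j⟩ ⟨k, l⟩
  simp [Matrix.kroneckerMap_apply, mul_sub]

lemma psd_eq_ct_mul_self {M : Matrix n n ℂ} (h : M.PosSemidef) :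
    ∃ C : Matrix n n ℂ, M = Cᴴ * C := by
  classical
  open scoped MatrixOrder in
  exact CStarAlgebra.nonneg_iff_eq_star_mul_self.mp h.nonneg

lemma posSemidef_kron {A : Matrix n n ℂ} {B : Matrix m m ℂ}
    (hA : A.PosSemidef) (hB : B.PosSemidef) : (A ⊗ₖ B).PosSemidef := by
  obtain ⟨C, rfl⟩ := psd_eq_ct_mul_self hA
  obtain ⟨D, rfl⟩ := psd_eq_ct_mul_self hB
  rw [Matrix.mul_kronecker_mul, ← kron_conjTranspose]
  exact Matrix.posSemidef_conjTranspose_mul_self _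

lemma trace_nonneg_of_psd {M : Matrix n n ℂ} (h : M.PosSemidef) : 0 ≤ M.trace := by
  classical
  rw [Matrix.trace]
  refine Finset.sum_nonneg fun i _ => ?_
  have h2 := h.dotProduct_mulVec_nonneg (Pi.single i 1)
  simpa [dotProduct, Matrix.mulVec, Pi.single_apply, Finset.sum_ite_eq,
    apply_ite, mul_comm] using h2

lemma trace_re_nonneg_of_psd {M : Matrix n n ℂ} (h : M.PosSemidef) : 0 ≤ M.trace.re :=
  (Complex.le_def.mp (trace_nonneg_of_psd h)).1

lemma trace_im_zero_of_psd {M : Matrix n n ℂ} (h : M.PosSemidef) : M.trace.im = 0 :=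
  ((Complex.le_def.mp (trace_nonneg_of_psd h)).2).symm

lemma trace_mul_nonneg_of_psd {M N : Matrix n n ℂ} (hM : M.PosSemidef) (hN : N.PosSemidef) :
    0 ≤ (M * N).trace := by
  obtain ⟨C, rfl⟩ := psd_eq_ct_mul_self hN
  rw [Matrix.trace_mul_comm, mul_assoc, Matrix.trace_mul_comm]
  exact trace_nonneg_of_psd (hM.mul_mul_conjTranspose_same C)

lemma posSemidef_real_smul {M : Matrix n n ℂ} (h : M.PosSemidef) {t : ℝ} (ht : 0 ≤ t) :
    ((t : ℂ) • M).PosSemidef := by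
  refine .of_dotProduct_mulVec_nonneg ?_ fun x => ?_
  · have hh : Mᴴ = M := h.1
    show ((t : ℂ) • M)ᴴ = _
    rw [conjTranspose_smul, hh]
    congr 1
    simp
  · rw [Matrix.smul_mulVec, dotProduct_smul, smul_eq_mul]
    exact mul_nonneg (by exact_mod_cast Complex.zero_le_real.mpr ht) (h.dotProduct_mulVec_nonneg x)

lemma posSemidef_vecMulVec [DecidableEq n] (x : n → ℂ) :
    (Matrix.vecMulVec x (star x)).PosSemidef := by
  refine .of_dotProduct_mulVec_nonneg ?_ fun z => ?_
  · ext a b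
    simp [Matrix.vecMulVec_apply, Matrix.conjTranspose_apply, mul_comm]
  · have hmv : Matrix.vecMulVec x (star x) *ᵥ z = (star x ⬝ᵥ z) • x := by
      ext a
      simp [Matrix.vecMulVec_apply, Matrix.mulVec, dotProduct, Finset.mul_sum,
        mul_assoc, mul_comm, mul_left_comm]
    rw [hmv, dotProduct_smul, smul_eq_mul]
    have h2 : star z ⬝ᵥ x = star (star x ⬝ᵥ z) := by
      rw [star_dotProduct]
    rw [h2]
    exact mul_star_self_nonneg _

lemma exists_smul_one_le [DecidableEq n] {G : Matrix n n ℂ} (hG : G.PosDef) :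
    ∃ c : ℝ, 0 < c ∧ (G - (c : ℂ) • 1).PosSemidef := by
  cases isEmpty_or_nonempty n with
  | inl h =>
      refine ⟨1, one_pos, .of_dotProduct_mulVec_nonneg ?_ fun x => ?_⟩
      · ext i j; exact (IsEmpty.false i).elim
      · simp [dotProduct]
  | inr h =>
      have hherm := hG.isHermitian
      set c : ℝ := Finset.univ.inf' Finset.univ_nonempty hherm.eigenvalues with hc
      refine ⟨c, ?_, ?_⟩
      · rw [Finset.lt_inf'_iff]
        exact fun i _ => hG.eigenvalues_pos i
      · have hU : (hherm.eigenvectorUnitary : Matrix n n ℂ) *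
            (star hherm.eigenvectorUnitary : Matrix n n ℂ) = 1 :=
          (Matrix.mem_unitaryGroup_iff).mp hherm.eigenvectorUnitary.2
        have hone : (c : ℂ) • (1 : Matrix n n ℂ) =
            (hherm.eigenvectorUnitary : Matrix n n ℂ) *
              ((c : ℂ) • (1 : Matrix n n ℂ)) * (star hherm.eigenvectorUnitary : Matrix n n ℂ) := by
          rw [Matrix.mul_smul, mul_one, Matrix.smul_mul, hU]
        have hspec := hherm.spectral_theorem
        rw [hspec, Unitary.conjStarAlgAut_apply, hone, ← Matrix.sub_mul, ← Matrix.mul_sub]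
        have hdiag : (Matrix.diagonal (RCLike.ofReal ∘ hherm.eigenvalues) -
            (c : ℂ) • (1 : Matrix n n ℂ)) =
            Matrix.diagonal (fun i => ((hherm.eigenvalues i - c : ℝ) : ℂ)) := by
          rw [Matrix.smul_one_eq_diagonal, Matrix.diagonal_sub]
          ext i
          simp
        rw [hdiag]
        have hpsd : (Matrix.diagonal
            (fun i => ((hherm.eigenvalues i - c : ℝ) : ℂ))).PosSemidef := by
          refine Matrix.PosSemidef.diagonal fun i => ?_
          show (0:ℂ) ≤ _
          rw [Complex.zero_le_real]
          have := Finset.inf'_le hherm.eigenvalues (Finset.mem_univ i)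
          rw [← hc] at this
          linarith
        have := hpsd.mul_mul_conjTranspose_same (hherm.eigenvectorUnitary : Matrix n n ℂ)
        simpa [Matrix.star_eq_conjTranspose] using this

end Basic

noncomputable def ptraceB {A B : Type*} [Fintype B] (M : Matrix (A × B) (A × B) ℂ) :
    Matrix A A ℂ :=
  Matrix.of fun a a' => ∑ b : B, M (a, b) (a', b)

lemma star_ite {c : Prop} [Decidable c] (a b : ℂ) :
    star (if c then a else b) = if c then star a else star b := by
  split_ifs <;> rfl

section PT
variable {A B : Type*} [Fintype A] [Fintype B] [DecidableEq A] [DecidableEq B]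

lemma trace_kron_one_mul (S : Matrix A A ℂ) (P : Matrix (A × B) (A × B) ℂ) :
    ((S ⊗ₖ (1 : Matrix B B ℂ)) * P).trace = (S * ptraceB P).trace := by
  simp only [Matrix.trace, Matrix.diag_apply, Matrix.mul_apply, ptraceB,
    Matrix.kroneckerMap_apply, Matrix.of_apply, Matrix.one_apply, Fintype.sum_prod_type,
    mul_ite, mul_one, mul_zero, ite_mul, zero_mul, Finset.sum_ite_eq, Finset.sum_ite_eq',
    Finset.mem_univ, if_true, Finset.mul_sum]
  exact Finset.sum_congr rfl fun a _ => Finset.sum_comm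

lemma isHermitian_ptraceB {P : Matrix (A × B) (A × B) ℂ} (hP : P.IsHermitian) :
    (ptraceB P).IsHermitian := by
  ext a a'
  simp only [conjTranspose_apply, ptraceB, Matrix.of_apply, star_sum]
  exact Finset.sum_congr rfl fun b _ => hP.apply (a, b) (a', b)

lemma dotProduct_ptraceB (P : Matrix (A × B) (A × B) ℂ) (x : A → ℂ) :
    star x ⬝ᵥ ptraceB P *ᵥ x
      = ∑ b : B, star (fun p : A × B => if p.2 = b then x p.1 else 0) ⬝ᵥ
          P *ᵥ (fun p : A × B => if p.2 = b then x p.1 else 0) := by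
  simp only [dotProduct, Matrix.mulVec, ptraceB, Matrix.of_apply,
    Fintype.sum_prod_type, Pi.star_apply, star_ite, star_zero, mul_ite, mul_zero, ite_mul,
    zero_mul, Finset.sum_ite_eq, Finset.sum_ite_eq', Finset.mem_univ, if_true, Finset.mul_sum,
    Finset.sum_ite_irrel, Finset.sum_const_zero, Finset.sum_mul]
  exact (Finset.sum_congr rfl fun a _ => Finset.sum_comm).trans Finset.sum_comm

lemma posSemidef_ptraceB {P : Matrix (A × B) (A × B) ℂ} (hP : P.PosSemidef) :
    (ptraceB P).PosSemidef := by
  refine .of_dotProduct_mulVec_nonneg (isHermitian_ptraceB hP.1) fun x => ?_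
  rw [dotProduct_ptraceB]
  exact Finset.sum_nonneg fun b _ => hP.dotProduct_mulVec_nonneg _

lemma posSemidef_of_proj {P : Matrix (A × B) (A × B) ℂ} (hPherm : P.IsHermitian)
    (hPproj : P * P = P) : P.PosSemidef := by
  have hh : Pᴴ = P := hPherm
  have h2 : P = Pᴴ * P := by rw [hh, hPproj]
  rw [h2]
  exact Matrix.posSemidef_conjTranspose_mul_self P

lemma trace_eq_card_of_ptraceA (U : Matrix (A × B) (A × B) ℂ) (h : ptraceA U = 1) :
    U.trace = (Fintype.card B : ℂ) := by
  have h1 : U.trace = (ptraceA U).trace := by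
    simp only [Matrix.trace, Matrix.diag_apply, ptraceA, Matrix.of_apply, Fintype.sum_prod_type]
    exact Finset.sum_comm
  rw [h1, h, Matrix.trace_one]

/-- The key trace bound: for a feasible pair, `Tr(S · ptraceB P) ≤ |B|`. -/
lemma trace_mul_ptraceB_le {P U : Matrix (A × B) (A × B) ℂ} {S : Matrix A A ℂ}
    (hPherm : P.IsHermitian) (hPproj : P * P = P)
    (hf : FeasibleMinus P S U) : (S * ptraceB P).trace ≤ (Fintype.card B : ℂ) := by
  obtain ⟨hS, hU, htr, hcon⟩ := hf
  have hh : Pᴴ = P := hPherm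
  have h1 : (P * (S ⊗ₖ (1 : Matrix B B ℂ) - U) * P).trace ≤ 0 := by
    have h0 := trace_nonneg_of_psd hcon
    rw [Matrix.trace_neg] at h0
    exact neg_nonneg.mp h0
  have h2 : P * (S ⊗ₖ (1 : Matrix B B ℂ) - U) * P
      = P * (S ⊗ₖ (1 : Matrix B B ℂ)) * P - P * U * P := by
    rw [Matrix.mul_sub, Matrix.sub_mul]
  have h3 : (P * (S ⊗ₖ (1 : Matrix B B ℂ)) * P).trace = (S * ptraceB P).trace := by
    rw [Matrix.trace_mul_cycle, hPproj, Matrix.trace_mul_comm, trace_kron_one_mul]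
  have h4 : (P * U * P).trace = (U * P).trace := by
    rw [Matrix.trace_mul_cycle, hPproj, Matrix.trace_mul_comm]
  have h5 : (U * P).trace ≤ U.trace := by
    set Q : Matrix (A × B) (A × B) ℂ := 1 - P with hQ
    have hQ2 : Q * Q = Q := by
      rw [hQ, sub_mul, one_mul, mul_sub, mul_one, hPproj]
      simp
    have hQh : Qᴴ = Q := by
      rw [hQ, conjTranspose_sub, conjTranspose_one, hh]
    have hpsd : (Q * U * Q).PosSemidef := by
      have := hU.conjTranspose_mul_mul_same Q
      rwa [hQh] at this
    have htr0 : 0 ≤ (Q * U * Q).trace := trace_nonneg_of_psd hpsd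
    have heq : (Q * U * Q).trace = U.trace - (U * P).trace := by
      rw [Matrix.trace_mul_cycle, hQ2, Matrix.trace_mul_comm, hQ,
        Matrix.mul_sub, mul_one, Matrix.trace_sub]
    rw [heq] at htr0
    exact sub_nonneg.mp htr0
  have h6 : U.trace = (Fintype.card B : ℂ) := trace_eq_card_of_ptraceA U htr
  have h7 : (S * ptraceB P).trace - (U * P).trace ≤ 0 := by
    rw [← h3, ← h4, ← Matrix.trace_sub, ← h2]
    exact h1
  calc (S * ptraceB P).trace ≤ (U * P).trace := sub_nonpos.mp h7
    _ ≤ U.trace := h5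
    _ = _ := h6

lemma bddAbove_feasible {P : Matrix (A × B) (A × B) ℂ}
    (hPherm : P.IsHermitian) (hPproj : P * P = P) {c : ℝ} (hc : 0 < c)
    (hcle : (ptraceB P - (c : ℂ) • 1).PosSemidef) :
    BddAbove {r : ℝ | ∃ S U, FeasibleMinus P S U ∧ S.trace.re = r} := by
  refine ⟨(Fintype.card B : ℝ) / c, fun r hr => ?_⟩
  obtain ⟨S, U, hf, rfl⟩ := hr
  have h0 : 0 ≤ (S * (ptraceB P - (c : ℂ) • 1)).trace := trace_mul_nonneg_of_psd hf.1 hcle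
  have hexp : S * (ptraceB P - (c : ℂ) • 1) = S * ptraceB P - (c : ℂ) • S := by
    rw [Matrix.mul_sub, Matrix.mul_smul, mul_one]
  rw [hexp, Matrix.trace_sub, Matrix.trace_smul] at h0
  have h1 := trace_mul_ptraceB_le hPherm hPproj hf
  have h0re := (Complex.le_def.mp h0).1
  have h1re := (Complex.le_def.mp h1).1
  simp only [Complex.sub_re, Complex.zero_re, smul_eq_mul, Complex.mul_re,
    Complex.ofReal_re, Complex.ofReal_im, zero_mul, sub_zero, Complex.natCast_re] at h0re h1re
  rw [le_div_iff₀ hc]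
  nlinarith

lemma not_bddAbove_of_null {P U₀ : Matrix (A × B) (A × B) ℂ} {S₀ : Matrix A A ℂ}
    (hPherm : P.IsHermitian) (hPproj : P * P = P)
    (hf₀ : FeasibleMinus P S₀ U₀) {x : A → ℂ} (hx : x ≠ 0)
    (hnull : star x ⬝ᵥ ptraceB P *ᵥ x = 0) :
    ¬ BddAbove {r : ℝ | ∃ S U, FeasibleMinus P S U ∧ S.trace.re = r} := by
  classical
  have hP : P.PosSemidef := posSemidef_of_proj hPherm hPproj
  set y : B → (A × B) → ℂ := fun b p => if p.2 = b then x p.1 else 0 with hy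
  have hterm : ∀ b : B, star (y b) ⬝ᵥ P *ᵥ y b = 0 := by
    have hsum : ∑ b : B, star (y b) ⬝ᵥ P *ᵥ y b = 0 := by
      rw [← dotProduct_ptraceB, hnull]
    have := (Finset.sum_eq_zero_iff_of_nonneg
      (fun b _ => hP.dotProduct_mulVec_nonneg (y b))).mp hsum
    exact fun b => this b (Finset.mem_univ b)
  have hyzero : ∀ b : B, P *ᵥ y b = 0 := fun b =>
    (hP.dotProduct_mulVec_zero_iff (y b)).mp (hterm b)
  set W : Matrix (A × B) (A × B) ℂ :=
    Matrix.vecMulVec x (star x) ⊗ₖ (1 : Matrix B B ℂ) with hW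
  have hWsum : W = ∑ b : B, Matrix.vecMulVec (y b) (star (y b)) := by
    ext ⟨a, c⟩ ⟨a', c'⟩
    simp only [hW, Matrix.kroneckerMap_apply, Matrix.vecMulVec_apply, Matrix.one_apply,
      Matrix.sum_apply, hy, Pi.star_apply, star_ite, star_zero, mul_ite, mul_zero, ite_mul,
      zero_mul, Finset.sum_ite_eq, Finset.mem_univ, if_true]
    by_cases h : c = c' <;> simp [h, eq_comm]
  have hPW : P * W * P = 0 := by
    rw [hWsum, Finset.mul_sum, Finset.sum_mul]
    refine Finset.sum_eq_zero fun b _ => ?_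
    have hfac : P * Matrix.vecMulVec (y b) (star (y b))
        = Matrix.vecMulVec (P *ᵥ y b) (star (y b)) := by
      ext i j
      simp only [Matrix.mul_apply, Matrix.vecMulVec_apply, Matrix.mulVec, dotProduct]
      rw [Finset.sum_mul]
      exact Finset.sum_congr rfl fun k _ => (mul_assoc _ _ _).symm
    rw [hfac, hyzero b]
    have : Matrix.vecMulVec (0 : (A × B) → ℂ) (star (y b)) = 0 := by
      ext i j; simp [Matrix.vecMulVec_apply]
    rw [this, zero_mul]
  -- trace of the rank-one perturbation
  set N : ℝ := ∑ a : A, Complex.normSq (x a) with hN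
  have hNpos : 0 < N := by
    obtain ⟨a, ha⟩ := Function.ne_iff.mp hx
    exact Finset.sum_pos' (fun i _ => Complex.normSq_nonneg _)
      ⟨a, Finset.mem_univ a, Complex.normSq_pos.mpr ha⟩
  have htrW : (Matrix.vecMulVec x (star x)).trace = (N : ℂ) := by
    rw [hN]
    push_cast
    rw [Matrix.trace]
    refine Finset.sum_congr rfl fun a _ => ?_
    simp only [Matrix.diag_apply, Matrix.vecMulVec_apply, Pi.star_apply]
    rw [RCLike.star_def, Complex.mul_conj]
  -- feasibility of the shifted pair
  have hfeas : ∀ t : ℝ, 0 ≤ t →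
      FeasibleMinus P (S₀ + (t : ℂ) • Matrix.vecMulVec x (star x)) U₀ := by
    intro t ht
    obtain ⟨hS₀, hU₀, htr₀, hcon₀⟩ := hf₀
    refine ⟨hS₀.add (posSemidef_real_smul (posSemidef_vecMulVec x) ht), hU₀, htr₀, ?_⟩
    have hcc : P * ((S₀ + (t : ℂ) • Matrix.vecMulVec x (star x)) ⊗ₖ (1 : Matrix B B ℂ) - U₀) * P
        = P * (S₀ ⊗ₖ (1 : Matrix B B ℂ) - U₀) * P := by
      rw [Matrix.add_kronecker, Matrix.smul_kronecker, add_sub_right_comm,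
        Matrix.mul_add, Matrix.add_mul, mul_smul_comm, smul_mul_assoc, ← hW, hPW,
        smul_zero, add_zero]
    rw [hcc]
    exact hcon₀
  rw [not_bddAbove_iff]
  intro M
  set t : ℝ := max 0 ((M + 1 - S₀.trace.re) / N) with htdef
  have ht : 0 ≤ t := le_max_left _ _
  refine ⟨S₀.trace.re + t * N, ⟨_, _, hfeas t ht, ?_⟩, ?_⟩
  · rw [Matrix.trace_add, Matrix.trace_smul, htrW, Complex.add_re, smul_eq_mul]
    push_cast
    simp
  · rcases le_total ((M + 1 - S₀.trace.re) / N) 0 with h | h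
    · have h2 : M + 1 - S₀.trace.re ≤ 0 := by
        by_contra h3
        push_neg at h3
        have := div_pos h3 hNpos
        linarith
      nlinarith [mul_nonneg ht hNpos.le]
    · have h2 : t = (M + 1 - S₀.trace.re) / N := max_eq_right h
      rw [h2, div_mul_cancel₀ _ hNpos.ne']
      linarith

end PT

section Reindex
variable {X Y : Type*} [Fintype X] [Fintype Y]

lemma reindex_psd (e : X ≃ Y) {M : Matrix X X ℂ} (h : M.PosSemidef) :
    (Matrix.reindex e e M).PosSemidef := by
  rw [Matrix.reindex_apply]
  exact (Matrix.posSemidef_submatrix_equiv e.symm).mpr h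

lemma reindex_mul (e : X ≃ Y) (M N : Matrix X X ℂ) :
    Matrix.reindex e e M * Matrix.reindex e e N = Matrix.reindex e e (M * N) := by
  simp [Matrix.reindex_apply, Matrix.submatrix_mul_equiv]

lemma reindex_herm (e : X ≃ Y) {M : Matrix X X ℂ} (h : M.IsHermitian) :
    (Matrix.reindex e e M).IsHermitian := by
  have hh : Mᴴ = M := h
  show (Matrix.reindex e e M)ᴴ = _
  rw [Matrix.reindex_apply, Matrix.conjTranspose_submatrix, hh]

end Reindex

section Prod
variable {A₁ B₁ A₂ B₂ : Type*} [Fintype A₁] [Fintype B₁] [Fintype A₂] [Fintype B₂]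
  [DecidableEq A₁] [DecidableEq B₁] [DecidableEq A₂] [DecidableEq B₂]

local notation "e₄" => Equiv.prodProdProdComm A₁ B₁ A₂ B₂

lemma ptraceA_reindex_kron {U₁ : Matrix (A₁ × B₁) (A₁ × B₁) ℂ}
    {U₂ : Matrix (A₂ × B₂) (A₂ × B₂) ℂ} (h₁ : ptraceA U₁ = 1) (h₂ : ptraceA U₂ = 1) :
    ptraceA (Matrix.reindex e₄ e₄ (U₁ ⊗ₖ U₂)) = 1 := by
  ext ⟨b₁, b₂⟩ ⟨b₁', b₂'⟩
  have key : ptraceA (Matrix.reindex e₄ e₄ (U₁ ⊗ₖ U₂)) (b₁, b₂) (b₁', b₂')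
      = ptraceA U₁ b₁ b₁' * ptraceA U₂ b₂ b₂' := by
    simp only [ptraceA, Matrix.of_apply, Matrix.reindex_apply, Matrix.submatrix_apply,
      Equiv.prodProdProdComm_symm, Equiv.prodProdProdComm_apply,
      Matrix.kroneckerMap_apply, Fintype.sum_prod_type]
    rw [Finset.sum_mul_sum]
  rw [key, h₁, h₂, ← Matrix.one_kronecker_one (α := ℂ) (m := B₁) (n := B₂)]
  rfl

lemma ptraceB_reindex_kron (P₁ : Matrix (A₁ × B₁) (A₁ × B₁) ℂ)
    (P₂ : Matrix (A₂ × B₂) (A₂ × B₂) ℂ) :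
    ptraceB (Matrix.reindex e₄ e₄ (P₁ ⊗ₖ P₂)) = ptraceB P₁ ⊗ₖ ptraceB P₂ := by
  ext ⟨a₁, a₂⟩ ⟨a₁', a₂'⟩
  simp only [ptraceB, Matrix.of_apply, Matrix.reindex_apply, Matrix.submatrix_apply,
    Equiv.prodProdProdComm_symm, Equiv.prodProdProdComm_apply,
    Matrix.kroneckerMap_apply, Fintype.sum_prod_type]
  rw [Finset.sum_mul_sum]

lemma kron_one_reindex (S₁ : Matrix A₁ A₁ ℂ) (S₂ : Matrix A₂ A₂ ℂ) :
    (S₁ ⊗ₖ S₂) ⊗ₖ (1 : Matrix (B₁ × B₂) (B₁ × B₂) ℂ)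
      = Matrix.reindex e₄ e₄ ((S₁ ⊗ₖ (1 : Matrix B₁ B₁ ℂ)) ⊗ₖ (S₂ ⊗ₖ (1 : Matrix B₂ B₂ ℂ))) := by
  ext ⟨⟨a₁, a₂⟩, ⟨b₁, b₂⟩⟩ ⟨⟨a₁', a₂'⟩, ⟨b₁', b₂'⟩⟩
  simp only [Matrix.kroneckerMap_apply, Matrix.reindex_apply, Matrix.submatrix_apply,
    Equiv.prodProdProdComm_symm, Equiv.prodProdProdComm_apply, Matrix.one_apply,
    Prod.mk.injEq]
  by_cases h1 : b₁ = b₁' <;> by_cases h2 : b₂ = b₂' <;> simp [h1, h2] <;> ring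

lemma feasible_kron
    {P₁ U₁ : Matrix (A₁ × B₁) (A₁ × B₁) ℂ} {S₁ : Matrix A₁ A₁ ℂ}
    {P₂ U₂ : Matrix (A₂ × B₂) (A₂ × B₂) ℂ} {S₂ : Matrix A₂ A₂ ℂ}
    (hP₁herm : P₁.IsHermitian) (hP₂herm : P₂.IsHermitian)
    (h₁ : FeasibleMinus P₁ S₁ U₁) (h₂ : FeasibleMinus P₂ S₂ U₂) :
    FeasibleMinus (Matrix.reindex e₄ e₄ (P₁ ⊗ₖ P₂)) (S₁ ⊗ₖ S₂)
      (Matrix.reindex e₄ e₄ (U₁ ⊗ₖ U₂)) := by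
  obtain ⟨hS₁, hU₁, htr₁, hcon₁⟩ := h₁
  obtain ⟨hS₂, hU₂, htr₂, hcon₂⟩ := h₂
  have hh₁ : P₁ᴴ = P₁ := hP₁herm
  have hh₂ : P₂ᴴ = P₂ := hP₂herm
  refine ⟨posSemidef_kron hS₁ hS₂, reindex_psd _ (posSemidef_kron hU₁ hU₂),
    ptraceA_reindex_kron htr₁ htr₂, ?_⟩
  have hmid : (S₁ ⊗ₖ S₂) ⊗ₖ (1 : Matrix (B₁ × B₂) (B₁ × B₂) ℂ)
      - Matrix.reindex e₄ e₄ (U₁ ⊗ₖ U₂)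
      = Matrix.reindex e₄ e₄
          ((S₁ ⊗ₖ (1 : Matrix B₁ B₁ ℂ)) ⊗ₖ (S₂ ⊗ₖ (1 : Matrix B₂ B₂ ℂ)) - U₁ ⊗ₖ U₂) := by
    rw [kron_one_reindex]
    ext i j
    simp [Matrix.reindex_apply, Matrix.submatrix_apply]
  rw [hmid, reindex_mul, reindex_mul]
  have hre : -(Matrix.reindex e₄ e₄ (P₁ ⊗ₖ P₂ *
      ((S₁ ⊗ₖ (1 : Matrix B₁ B₁ ℂ)) ⊗ₖ (S₂ ⊗ₖ (1 : Matrix B₂ B₂ ℂ)) - U₁ ⊗ₖ U₂) *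
      (P₁ ⊗ₖ P₂))) = Matrix.reindex e₄ e₄ (-(P₁ ⊗ₖ P₂ *
      ((S₁ ⊗ₖ (1 : Matrix B₁ B₁ ℂ)) ⊗ₖ (S₂ ⊗ₖ (1 : Matrix B₂ B₂ ℂ)) - U₁ ⊗ₖ U₂) *
      (P₁ ⊗ₖ P₂))) := by
    ext i j
    simp [Matrix.reindex_apply, Matrix.submatrix_apply]
  rw [hre]
  refine reindex_psd _ ?_
  have l1 : P₁ * (S₁ ⊗ₖ (1 : Matrix B₁ B₁ ℂ) - U₁) * P₁
      = P₁ * (S₁ ⊗ₖ (1 : Matrix B₁ B₁ ℂ)) * P₁ - P₁ * U₁ * P₁ := by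
    rw [Matrix.mul_sub, Matrix.sub_mul]
  have l2 : P₂ * (S₂ ⊗ₖ (1 : Matrix B₂ B₂ ℂ) - U₂) * P₂
      = P₂ * (S₂ ⊗ₖ (1 : Matrix B₂ B₂ ℂ)) * P₂ - P₂ * U₂ * P₂ := by
    rw [Matrix.mul_sub, Matrix.sub_mul]
  have l3 : P₁ ⊗ₖ P₂ *
      ((S₁ ⊗ₖ (1 : Matrix B₁ B₁ ℂ)) ⊗ₖ (S₂ ⊗ₖ (1 : Matrix B₂ B₂ ℂ)) - U₁ ⊗ₖ U₂) *
      (P₁ ⊗ₖ P₂)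
      = (P₁ * (S₁ ⊗ₖ (1 : Matrix B₁ B₁ ℂ)) * P₁) ⊗ₖ (P₂ * (S₂ ⊗ₖ (1 : Matrix B₂ B₂ ℂ)) * P₂)
        - (P₁ * U₁ * P₁) ⊗ₖ (P₂ * U₂ * P₂) := by
    rw [Matrix.mul_sub, Matrix.sub_mul, ← Matrix.mul_kronecker_mul, ← Matrix.mul_kronecker_mul,
      ← Matrix.mul_kronecker_mul, ← Matrix.mul_kronecker_mul]
  have hdecomp : -(P₁ ⊗ₖ P₂ *
      ((S₁ ⊗ₖ (1 : Matrix B₁ B₁ ℂ)) ⊗ₖ (S₂ ⊗ₖ (1 : Matrix B₂ B₂ ℂ)) - U₁ ⊗ₖ U₂) *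
      (P₁ ⊗ₖ P₂))
      = (-(P₁ * (S₁ ⊗ₖ (1 : Matrix B₁ B₁ ℂ) - U₁) * P₁)) ⊗ₖ
          (P₂ * (S₂ ⊗ₖ (1 : Matrix B₂ B₂ ℂ)) * P₂)
        + (P₁ * U₁ * P₁) ⊗ₖ (-(P₂ * (S₂ ⊗ₖ (1 : Matrix B₂ B₂ ℂ) - U₂) * P₂)) := by
    rw [l3, l1, l2, neg_sub, neg_sub, neg_sub, sub_kron, kron_sub]
    abel
  rw [hdecomp]
  have hpsd1 : (P₂ * (S₂ ⊗ₖ (1 : Matrix B₂ B₂ ℂ)) * P₂).PosSemidef := by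
    have := (posSemidef_kron hS₂ Matrix.PosSemidef.one).mul_mul_conjTranspose_same P₂
    rwa [hh₂] at this
  have hpsd2 : (P₁ * U₁ * P₁).PosSemidef := by
    have := hU₁.mul_mul_conjTranspose_same P₁
    rwa [hh₁] at this
  exact (posSemidef_kron hcon₁ hpsd1).add (posSemidef_kron hpsd2 hcon₂)

end Prod
end SigmaAux

open SigmaAux in
/-- Restricted-dual supermultiplicativity: if `(S₁, U₁)` is `Σ⁻`-feasible for
`P₁` and `(S₂, U₂)` is `Σ⁻`-feasible for `P₂`, then `(S₁ ⊗ S₂, U₁ ⊗ U₂)` is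
`Σ⁻`-feasible for `P₁ ⊗ P₂`; hence `Σ⁻(P₁ ⊗ P₂) ≥ Σ⁻(P₁) · Σ⁻(P₂)`. -/
theorem sigmaMinus_supermultiplicative
    {A₁ B₁ A₂ B₂ : Type*} [Fintype A₁] [Fintype B₁] [Fintype A₂] [Fintype B₂]
    [DecidableEq A₁] [DecidableEq B₁] [DecidableEq A₂] [DecidableEq B₂]
    (P₁ U₁ : Matrix (A₁ × B₁) (A₁ × B₁) ℂ) (S₁ : Matrix A₁ A₁ ℂ)
    (P₂ U₂ : Matrix (A₂ × B₂) (A₂ × B₂) ℂ) (S₂ : Matrix A₂ A₂ ℂ)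
    (hP₁herm : P₁.IsHermitian) (hP₁proj : P₁ * P₁ = P₁)
    (hP₂herm : P₂.IsHermitian) (hP₂proj : P₂ * P₂ = P₂)
    (h₁ : FeasibleMinus P₁ S₁ U₁) (h₂ : FeasibleMinus P₂ S₂ U₂) :
    FeasibleMinus (Matrix.reindex (Equiv.prodProdProdComm A₁ B₁ A₂ B₂)
        (Equiv.prodProdProdComm A₁ B₁ A₂ B₂) (P₁ ⊗ₖ P₂))
      (S₁ ⊗ₖ S₂)
      (Matrix.reindex (Equiv.prodProdProdComm A₁ B₁ A₂ B₂)
        (Equiv.prodProdProdComm A₁ B₁ A₂ B₂) (U₁ ⊗ₖ U₂)) ∧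
    sigmaMinus P₁ * sigmaMinus P₂ ≤
      sigmaMinus (Matrix.reindex (Equiv.prodProdProdComm A₁ B₁ A₂ B₂)
        (Equiv.prodProdProdComm A₁ B₁ A₂ B₂) (P₁ ⊗ₖ P₂)) := by
  classical
  have hh₁ : P₁ᴴ = P₁ := hP₁herm
  have hh₂ : P₂ᴴ = P₂ := hP₂herm
  set e := Equiv.prodProdProdComm A₁ B₁ A₂ B₂ with he
  set P₃ := Matrix.reindex e e (P₁ ⊗ₖ P₂) with hP₃
  refine ⟨feasible_kron hP₁herm hP₂herm h₁ h₂, ?_⟩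
  have hP₃herm : P₃.IsHermitian := by
    refine reindex_herm e ?_
    show (P₁ ⊗ₖ P₂)ᴴ = P₁ ⊗ₖ P₂
    rw [kron_conjTranspose, hh₁, hh₂]
  have hP₃proj : P₃ * P₃ = P₃ := by
    rw [hP₃, reindex_mul, ← Matrix.mul_kronecker_mul, hP₁proj, hP₂proj]
  set T₁ := {r : ℝ | ∃ S U, FeasibleMinus P₁ S U ∧ S.trace.re = r} with hT₁
  set T₂ := {r : ℝ | ∃ S U, FeasibleMinus P₂ S U ∧ S.trace.re = r} with hT₂
  set T₃ := {r : ℝ | ∃ S U, FeasibleMinus P₃ S U ∧ S.trace.re = r} with hT₃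
  have hs₁ : sigmaMinus P₁ = sSup T₁ := rfl
  have hs₂ : sigmaMinus P₂ = sSup T₂ := rfl
  have hs₃ : sigmaMinus P₃ = sSup T₃ := rfl
  rw [hs₁, hs₂, hs₃]
  have hnn₁ : ∀ r ∈ T₁, 0 ≤ r := by
    rintro r ⟨S, U, hf, rfl⟩
    exact trace_re_nonneg_of_psd hf.1
  have hnn₂ : ∀ r ∈ T₂, 0 ≤ r := by
    rintro r ⟨S, U, hf, rfl⟩
    exact trace_re_nonneg_of_psd hf.1
  have hnn₃ : ∀ r ∈ T₃, 0 ≤ r := by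
    rintro r ⟨S, U, hf, rfl⟩
    exact trace_re_nonneg_of_psd hf.1
  have hmem : ∀ r₁ ∈ T₁, ∀ r₂ ∈ T₂, r₁ * r₂ ∈ T₃ := by
    rintro r₁ ⟨S, U, hf, rfl⟩ r₂ ⟨S', U', hf', rfl⟩
    refine ⟨S ⊗ₖ S', Matrix.reindex e e (U ⊗ₖ U'),
      feasible_kron hP₁herm hP₂herm hf hf', ?_⟩
    rw [Matrix.trace_kronecker, Complex.mul_re, trace_im_zero_of_psd hf.1,
      trace_im_zero_of_psd hf'.1]
    ring
  by_cases hbad₁ : ∃ x : A₁ → ℂ, x ≠ 0 ∧ star x ⬝ᵥ ptraceB P₁ *ᵥ x = 0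
  · obtain ⟨x, hx, hx0⟩ := hbad₁
    rw [Real.sSup_of_not_bddAbove (not_bddAbove_of_null hP₁herm hP₁proj h₁ hx hx0), zero_mul]
    exact Real.sSup_nonneg hnn₃
  by_cases hbad₂ : ∃ x : A₂ → ℂ, x ≠ 0 ∧ star x ⬝ᵥ ptraceB P₂ *ᵥ x = 0
  · obtain ⟨x, hx, hx0⟩ := hbad₂
    rw [Real.sSup_of_not_bddAbove (not_bddAbove_of_null hP₂herm hP₂proj h₂ hx hx0), mul_zero]
    exact Real.sSup_nonneg hnn₃
  push_neg at hbad₁ hbad₂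
  have hG₁psd : (ptraceB P₁).PosSemidef := posSemidef_ptraceB (posSemidef_of_proj hP₁herm hP₁proj)
  have hG₂psd : (ptraceB P₂).PosSemidef := posSemidef_ptraceB (posSemidef_of_proj hP₂herm hP₂proj)
  have hG₁pd : (ptraceB P₁).PosDef :=
    .of_dotProduct_mulVec_pos hG₁psd.1 fun ⦃x⦄ hx => lt_of_le_of_ne (hG₁psd.dotProduct_mulVec_nonneg x) (Ne.symm (hbad₁ x hx))
  have hG₂pd : (ptraceB P₂).PosDef :=
    .of_dotProduct_mulVec_pos hG₂psd.1 fun ⦃x⦄ hx => lt_of_le_of_ne (hG₂psd.dotProduct_mulVec_nonneg x) (Ne.symm (hbad₂ x hx))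
  obtain ⟨c₁, hc₁, hle₁⟩ := exists_smul_one_le hG₁pd
  obtain ⟨c₂, hc₂, hle₂⟩ := exists_smul_one_le hG₂pd
  have hle₃ : (ptraceB P₃ - ((c₁ * c₂ : ℝ) : ℂ) • 1).PosSemidef := by
    rw [hP₃, ptraceB_reindex_kron]
    have heq : ptraceB P₁ ⊗ₖ ptraceB P₂ - ((c₁ * c₂ : ℝ) : ℂ) • 1
        = (ptraceB P₁ - (c₁ : ℂ) • 1) ⊗ₖ ptraceB P₂
          + ((c₁ : ℂ) • (1 : Matrix A₁ A₁ ℂ)) ⊗ₖ (ptraceB P₂ - (c₂ : ℂ) • 1) := by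
      ext ⟨i, j⟩ ⟨k, l⟩
      simp only [Matrix.sub_apply, Matrix.add_apply, Matrix.kroneckerMap_apply,
        Matrix.smul_apply, Matrix.one_apply, Prod.mk.injEq, smul_eq_mul, Complex.ofReal_mul]
      by_cases h1 : i = k <;> by_cases h2 : j = l <;> simp [h1, h2] <;> ring
    rw [heq]
    refine Matrix.PosSemidef.add (posSemidef_kron hle₁ hG₂psd)
      (posSemidef_kron (posSemidef_real_smul Matrix.PosSemidef.one hc₁.le) hle₂)
  have hbdd₃ : BddAbove T₃ := bddAbove_feasible hP₃herm hP₃proj (mul_pos hc₁ hc₂) hle₃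
  have hkey : ∀ r₁ ∈ T₁, ∀ r₂ ∈ T₂, r₁ * r₂ ≤ sSup T₃ := fun r₁ h1 r₂ h2 =>
    le_csSup hbdd₃ (hmem r₁ h1 r₂ h2)
  have hsup₃nn : 0 ≤ sSup T₃ := Real.sSup_nonneg hnn₃
  have hstep : ∀ r₁ ∈ T₁, r₁ * sSup T₂ ≤ sSup T₃ := by
    intro r₁ h1
    rcases (hnn₁ r₁ h1).eq_or_lt with h | h
    · rw [← h, zero_mul]; exact hsup₃nn
    · have : sSup T₂ ≤ sSup T₃ / r₁ := by
        refine Real.sSup_le (fun r₂ h2 => ?_) (div_nonneg hsup₃nn (hnn₁ r₁ h1))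
        rw [le_div_iff₀ h, mul_comm]
        exact hkey r₁ h1 r₂ h2
      calc r₁ * sSup T₂ ≤ r₁ * (sSup T₃ / r₁) := by
            exact mul_le_mul_of_nonneg_left this (hnn₁ r₁ h1)
        _ = sSup T₃ := by field_simp
  have hs₂nn : 0 ≤ sSup T₂ := Real.sSup_nonneg hnn₂
  rcases hs₂nn.eq_or_lt with h | h
  · rw [← h, mul_zero]; exact hsup₃nn
  · have : sSup T₁ ≤ sSup T₃ / sSup T₂ := by
      refine Real.sSup_le (fun r₁ h1 => ?_) (div_nonneg hsup₃nn hs₂nn)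
      rw [le_div_iff₀ h]
      exact hstep r₁ h1
    calc sSup T₁ * sSup T₂ ≤ (sSup T₃ / sSup T₂) * sSup T₂ :=
          mul_le_mul_of_nonneg_right this hs₂nn
      _ = sSup T₃ := by field_simp
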